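/- Let (X_α)_{α ∈ A} be a family of topological spaces in which every point has a neighbourhood basis of closed, quasi-compact neighbourhoods, let Y be a topological space in which every point has a neighbourhood basis of closed neighbourhoods, and let X := ∏_{α ∈ A} X_α carry the product topology. Let f : X → Y be a map such that f|_C is continuous for every quasi-compact subset C ⊆ X. Then for every x ∈ X and every neighbourhood U of f(x) in Y, the preimage f⁻¹(U) is a neighbourhood of x in X; that is, f is continuous at each point x ∈ X. -/
import Mathlib

open Set Filter Topology

section Aux

variable {A : Type*} {X : A → Type*} [∀ α, TopologicalSpace (X α)]
  {Y : Type*} [TopologicalSpace Y]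

/-- Auxiliary state for the recursion: a finite set `F` of coordinates together with
compact neighbourhoods `K α ⊆ L α` of `x α` for `α ∈ F` (and `K α = univ` off `F`),
such that every point confined to `K` on `F` and equal to `x` off `F` is mapped into `C₀`. -/
structure AuxSt (f : (∀ α, X α) → Y) (x : ∀ α, X α) (L : ∀ α, Set (X α)) (C₀ : Set Y) where
  F : Set A
  hFfin : F.Finite
  K : ∀ α, Set (X α)
  hKnhds : ∀ α, K α ∈ 𝓝 (x α)
  hKcomp : ∀ α ∈ F, IsCompact (K α)
  hKsubL : ∀ α ∈ F, K α ⊆ L α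
  hKuniv : ∀ α, α ∉ F → K α = Set.univ
  hinv : ∀ w : ∀ α, X α, (∀ α, w α ∈ K α) → (∀ α, α ∉ F → w α = x α) → f w ∈ C₀

/-- The key step of the recursion: given a state `s` and a point `w` with finite support,
one can enlarge `F` to absorb the support of `w`, and shrink the `K`'s, keeping the
invariant `hinv`. -/
theorem AuxSt.step
    (hX : ∀ (α : A) (x : X α), ∀ U ∈ nhds x,
      ∃ K ∈ nhds x, K ⊆ U ∧ IsClosed K ∧ IsCompact K)
    {f : (∀ α, X α) → Y} (hf : ∀ C : Set (∀ α, X α), IsCompact C → ContinuousOn f C)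
    {x : ∀ α, X α} {L : ∀ α, Set (X α)}
    (hLn : ∀ α, L α ∈ 𝓝 (x α)) (hLc : ∀ α, IsCompact (L α))
    {C₀ : Set Y} (hC₀ : C₀ ∈ 𝓝 (f x))
    (s : AuxSt f x L C₀) (w : ∀ α, X α)
    (hw2 : {α | w α ≠ x α}.Finite) :
    ∃ s' : AuxSt f x L C₀, s.F ⊆ s'.F ∧ (∀ α, s'.K α ⊆ s.K α) ∧
      (∀ α, α ∉ s.F → w α ≠ x α → α ∈ s'.F) := by
  classical
  set S : Set A := {α | α ∉ s.F ∧ w α ≠ x α} with hS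
  have hSfin : S.Finite := hw2.subset (fun α hα => hα.2)
  set K1 : ∀ α, Set (X α) := fun α => if α ∈ S then L α ∩ s.K α else s.K α with hK1
  set F1 : Set A := s.F ∪ S with hF1
  have hF1fin : F1.Finite := s.hFfin.union hSfin
  have hK1nhds : ∀ α, K1 α ∈ 𝓝 (x α) := by
    intro α
    by_cases h : α ∈ S <;> simp only [hK1, h, if_pos, if_neg, if_true, if_false]
    · exact inter_mem (hLn α) (s.hKnhds α)
    · exact s.hKnhds α
  have hK1subs : ∀ α, K1 α ⊆ s.K α := by
    intro α
    by_cases h : α ∈ S <;> simp only [hK1, h, if_pos, if_neg, if_true, if_false]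
    · exact inter_subset_right
    · exact subset_rfl
  have hK1comp : ∀ α ∈ F1, IsCompact (K1 α) := by
    intro α hα
    by_cases h : α ∈ S
    · simp only [hK1, h, if_true]
      rw [s.hKuniv α h.1, inter_univ]
      exact hLc α
    · have hαF : α ∈ s.F := hα.resolve_right h
      simp only [hK1, h, if_false]
      exact s.hKcomp α hαF
  have hK1subL : ∀ α ∈ F1, K1 α ⊆ L α := by
    intro α hα
    by_cases h : α ∈ S
    · simp only [hK1, h, if_true]; exact inter_subset_left
    · have hαF : α ∈ s.F := hα.resolve_right h
      simp only [hK1, h, if_false]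
      exact s.hKsubL α hαF
  have hK1univ : ∀ α, α ∉ F1 → K1 α = Set.univ := by
    intro α hα
    have h1 : α ∉ S := fun h => hα (Or.inr h)
    have h2 : α ∉ s.F := fun h => hα (Or.inl h)
    simp only [hK1, h1, if_false]
    exact s.hKuniv α h2
  -- the compact set P on which we use continuity of f at x
  set Q : ∀ α, Set (X α) := fun α => if α ∈ F1 then K1 α else L α with hQ
  have hQcomp : ∀ α, IsCompact (Q α) := by
    intro α
    by_cases h : α ∈ F1 <;> simp only [hQ, h, if_true, if_false]
    · exact hK1comp α h
    · exact hLc α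
  set P : Set (∀ α, X α) := Set.pi Set.univ Q with hP
  have hPcomp : IsCompact P := isCompact_univ_pi hQcomp
  have hxP : x ∈ P := by
    intro α _
    by_cases h : α ∈ F1 <;> simp only [hQ, h, if_true, if_false]
    · exact mem_of_mem_nhds (hK1nhds α)
    · exact mem_of_mem_nhds (hLn α)
  have hcw : ContinuousWithinAt f P x := hf P hPcomp x hxP
  have hpre : f ⁻¹' C₀ ∈ 𝓝[P] x := hcw.preimage_mem_nhdsWithin hC₀
  rw [mem_nhdsWithin_iff_exists_mem_nhds_inter] at hpre
  obtain ⟨N, hN, hNP⟩ := hpre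
  rw [nhds_pi, Filter.mem_pi] at hN
  obtain ⟨I, hIfin, t, ht, htN⟩ := hN
  -- choose compact neighbourhoods inside t α ∩ K1 α ∩ L α for α ∈ I
  have hchoice : ∀ α, ∃ KC ∈ 𝓝 (x α), KC ⊆ t α ∩ K1 α ∩ L α ∧ IsClosed KC ∧ IsCompact KC := by
    intro α
    exact hX α (x α) _ (inter_mem (inter_mem (ht α) (hK1nhds α)) (hLn α))
  choose KC hKC1 hKC2 _ hKC4 using hchoice
  set K2 : ∀ α, Set (X α) := fun α => if α ∈ I then KC α else K1 α with hK2
  set F2 : Set A := F1 ∪ I with hF2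
  have hK2subK1 : ∀ α, K2 α ⊆ K1 α := by
    intro α
    by_cases h : α ∈ I <;> simp only [hK2, h, if_true, if_false]
    · exact (hKC2 α).trans (inter_subset_left.trans inter_subset_right)
    · exact subset_rfl
  have hK2subL : ∀ α ∈ F2, K2 α ⊆ L α := by
    intro α hα
    by_cases h : α ∈ I
    · simp only [hK2, h, if_true]
      exact (hKC2 α).trans inter_subset_right
    · have hαF1 : α ∈ F1 := hα.resolve_right h
      simp only [hK2, h, if_false]
      exact hK1subL α hαF1
  refine ⟨⟨F2, hF1fin.union hIfin, K2, ?_, ?_, hK2subL, ?_, ?_⟩, ?_, ?_, ?_⟩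
  · intro α
    by_cases h : α ∈ I <;> simp only [hK2, h, if_true, if_false]
    · exact hKC1 α
    · exact hK1nhds α
  · intro α hα
    by_cases h : α ∈ I
    · simp only [hK2, h, if_true]; exact hKC4 α
    · have hαF1 : α ∈ F1 := hα.resolve_right h
      simp only [hK2, h, if_false]; exact hK1comp α hαF1
  · intro α hα
    have h1 : α ∉ I := fun h => hα (Or.inr h)
    have h2 : α ∉ F1 := fun h => hα (Or.inl h)
    simp only [hK2, h1, if_false]
    exact hK1univ α h2
  · -- the invariant
    intro w' hw'K hw'x
    refine hNP ⟨htN ?_, ?_⟩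
    · intro α hαI
      have := hw'K α
      simp only [hK2, hαI, if_true] at this
      exact ((hKC2 α) this).1.1
    · -- w' ∈ P
      intro α _
      by_cases h : α ∈ F1 <;> simp only [hQ, h, if_true, if_false]
      · exact hK2subK1 α (hw'K α)
      · by_cases hI : α ∈ I
        · have := hw'K α
          simp only [hK2, hI, if_true] at this
          exact ((hKC2 α) this).2
        · have : w' α = x α := hw'x α (fun hc => hc.elim h hI)
          rw [this]
          exact mem_of_mem_nhds (hLn α)
  · exact (subset_union_left.trans subset_union_left)
  · intro α; exact (hK2subK1 α).trans (hK1subs α)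
  · intro α h1 h2
    exact Or.inl (Or.inr ⟨h1, h2⟩)

/-- The σ-claim: there is a state such that every finitely-supported point confined to its
`K`'s is mapped into `Cω`. -/
theorem exists_good_state
    (hX : ∀ (α : A) (x : X α), ∀ U ∈ nhds x,
      ∃ K ∈ nhds x, K ⊆ U ∧ IsClosed K ∧ IsCompact K)
    {f : (∀ α, X α) → Y} (hf : ∀ C : Set (∀ α, X α), IsCompact C → ContinuousOn f C)
    {x : ∀ α, X α} {L : ∀ α, Set (X α)}
    (hLn : ∀ α, L α ∈ 𝓝 (x α)) (hLc : ∀ α, IsCompact (L α))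
    {C₀ Cω : Set Y} (hC₀n : C₀ ∈ 𝓝 (f x)) (hC₀cl : IsClosed C₀)
    (hC₀sub : C₀ ⊆ interior Cω) :
    ∃ s : AuxSt f x L C₀,
      ∀ w : ∀ α, X α, (∀ α, w α ∈ s.K α) → {α | w α ≠ x α}.Finite → f w ∈ Cω := by
  classical
  by_contra hcon
  push_neg at hcon
  -- from every state we get a "bad" point
  choose bw hbw1 hbw2 hbw3 using hcon
  choose nxt hsub hk hent using fun s =>
    AuxSt.step hX hf hLn hLc hC₀n s (bw s) (hbw2 s)
  -- base state
  have hbase : AuxSt f x L C₀ := by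
    refine ⟨∅, finite_empty, fun α => Set.univ, fun α => univ_mem, ?_, ?_, fun α _ => rfl, ?_⟩
    · intro α hα; exact absurd hα (notMem_empty α)
    · intro α hα; exact absurd hα (notMem_empty α)
    · intro w hwK hwx
      have : w = x := funext fun α => hwx α (notMem_empty α)
      rw [this]
      exact mem_of_mem_nhds hC₀n
  -- the recursive chain of states
  set c : ℕ → AuxSt f x L C₀ := fun m => Nat.rec hbase (fun _ s => nxt s) m with hc
  have hcs : ∀ m, c (m + 1) = nxt (c m) := fun m => rfl
  set W : ℕ → ∀ α, X α := fun m => bw (c m) with hW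
  have hFmono : ∀ m n, m ≤ n → (c m).F ⊆ (c n).F := by
    intro m n h
    induction n, h using Nat.le_induction with
    | base => exact subset_rfl
    | succ n hmn ih => exact ih.trans (by rw [hcs n]; exact hsub (c n))
  -- support indices: for each coordinate, the set of stages where W misbehaves is subsingleton
  have hEnt : ∀ α, {m : ℕ | W m α ≠ x α ∧ α ∉ (c m).F}.Subsingleton := by
    intro α m hm m' hm'
    by_contra hne
    rcases Nat.lt_or_ge m m' with h | h
    · have : α ∈ (c (m + 1)).F := by
        rw [hcs m]; exact hent (c m) α hm.2 hm.1
      exact hm'.2 (hFmono (m + 1) m' h this)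
    · have h' : m' < m := lt_of_le_of_ne h (fun e => hne (e ▸ rfl))
      have : α ∈ (c (m' + 1)).F := by
        rw [hcs m']; exact hent (c m') α hm'.2 hm'.1
      exact hm.2 (hFmono (m' + 1) m h' this)
  have hWL : ∀ m α, W m α ∉ L α → (W m α ≠ x α ∧ α ∉ (c m).F) := by
    intro m α hnL
    constructor
    · intro he; exact hnL (he ▸ mem_of_mem_nhds (hLn α))
    · intro hF; exact hnL ((c m).hKsubL α hF (hbw1 (c m) α))
  -- the compact set D
  set D : ∀ α, Set (X α) := fun α => L α ∪ {v | ∃ m, W m α = v ∧ v ∉ L α} with hD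
  have hJfin : ∀ α, {v | ∃ m, W m α = v ∧ v ∉ L α}.Finite := by
    intro α
    have hsub' : {v | ∃ m, W m α = v ∧ v ∉ L α} ⊆
        (fun m => W m α) '' {m : ℕ | W m α ≠ x α ∧ α ∉ (c m).F} := by
      rintro v ⟨m, rfl, hv⟩
      exact ⟨m, hWL m α hv, rfl⟩
    exact Finite.subset (Finite.image _ ((hEnt α).finite)) hsub'
  have hDcomp : ∀ α, IsCompact (D α) := fun α => (hLc α).union ((hJfin α).isCompact)
  have hWD : ∀ m α, W m α ∈ D α := by
    intro m α
    by_cases h : W m α ∈ L α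
    · exact Or.inl h
    · exact Or.inr ⟨m, rfl, h⟩
  have hxD : ∀ α, x α ∈ D α := fun α => Or.inl (mem_of_mem_nhds (hLn α))
  -- ultrafilter limit
  set 𝒰 : Ultrafilter ℕ := hyperfilter ℕ with h𝒰
  have hlim : ∀ α, ∃ u ∈ D α, Tendsto (fun m => W m α) 𝒰 (𝓝 u) := by
    intro α
    have hle : ↑(𝒰.map fun m => W m α) ≤ 𝓟 (D α) := by
      rw [Ultrafilter.coe_map, le_principal_iff, mem_map]
      exact univ_mem' (fun m => hWD m α)
    obtain ⟨u, hu, hle'⟩ := (hDcomp α).ultrafilter_le_nhds _ hle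
    exact ⟨u, hu, by rwa [Ultrafilter.coe_map] at hle'⟩
  choose u hu1 hu2 using hlim
  have hWt : Tendsto (fun m => W m) 𝒰 (𝓝 u) := tendsto_pi_nhds.2 hu2
  -- the truncated points
  classical
  set Wt : ℕ → ∀ α, X α := fun m α => if α ∈ (c m).F then W m α else x α with hWt'
  have hWtC₀ : ∀ m, f (Wt m) ∈ C₀ := by
    intro m
    refine (c m).hinv (Wt m) ?_ ?_
    · intro α
      by_cases h : α ∈ (c m).F <;> simp only [hWt', h, if_true, if_false]
      · exact hbw1 (c m) α
      · rw [(c m).hKuniv α h]; exact mem_univ _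
    · intro α hα
      simp only [hWt', hα, if_false]
  have hWtD : ∀ m, ∀ α, Wt m α ∈ D α := by
    intro m α
    by_cases h : α ∈ (c m).F <;> simp only [hWt', h, if_true, if_false]
    · exact hWD m α
    · exact hxD α
  have hWtt : Tendsto (fun m => Wt m) 𝒰 (𝓝 u) := by
    refine tendsto_pi_nhds.2 fun α => ?_
    refine (hu2 α).congr' ?_
    have : {m : ℕ | W m α ≠ Wt m α} ⊆ {m : ℕ | W m α ≠ x α ∧ α ∉ (c m).F} := by
      intro m hm
      by_cases h : α ∈ (c m).F
      · exact absurd (by simp only [hWt', h, if_true]) hm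
      · refine ⟨?_, h⟩
        intro he
        exact hm (by simp only [hWt', h, if_false, he])
    have hfin : {m : ℕ | W m α ≠ Wt m α}.Finite := Finite.subset ((hEnt α).finite) this
    have : {m : ℕ | W m α = Wt m α} ∈ 𝒰 := by
      refine mem_hyperfilter_of_finite_compl ?_
      refine hfin.subset ?_
      intro m hm
      exact hm
    exact this
  -- continuity of f on D gives the contradiction
  have hDall : IsCompact (Set.pi Set.univ D) := isCompact_univ_pi hDcomp
  have huD : u ∈ Set.pi Set.univ D := fun α _ => hu1 α
  have hcw : ContinuousWithinAt f (Set.pi Set.univ D) u := hf _ hDall u huD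
  have htendW : Tendsto (fun m => f (W m)) 𝒰 (𝓝 (f u)) := by
    refine hcw.tendsto.comp ?_
    rw [tendsto_nhdsWithin_iff]
    exact ⟨hWt, Eventually.of_forall fun m => fun α _ => hWD m α⟩
  have htendWt : Tendsto (fun m => f (Wt m)) 𝒰 (𝓝 (f u)) := by
    refine hcw.tendsto.comp ?_
    rw [tendsto_nhdsWithin_iff]
    exact ⟨hWtt, Eventually.of_forall fun m => fun α _ => hWtD m α⟩
  have hfu : f u ∈ C₀ := hC₀cl.mem_of_tendsto htendWt (Eventually.of_forall hWtC₀)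
  have hint : interior Cω ∈ 𝓝 (f u) := isOpen_interior.mem_nhds (hC₀sub hfu)
  obtain ⟨m, hm⟩ := (htendW.eventually hint).exists
  exact hbw3 (c m) (interior_subset hm)

/-- Key lemma: preimage of a closed neighbourhood (together with an inner closed
neighbourhood) is a neighbourhood. -/
theorem key_lemma
    (hX : ∀ (α : A) (x : X α), ∀ U ∈ nhds x,
      ∃ K ∈ nhds x, K ⊆ U ∧ IsClosed K ∧ IsCompact K)
    {f : (∀ α, X α) → Y} (hf : ∀ C : Set (∀ α, X α), IsCompact C → ContinuousOn f C)
    (x : ∀ α, X α) {C₀ Cω : Set Y} (hCωcl : IsClosed Cω)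
    (hC₀n : C₀ ∈ 𝓝 (f x)) (hC₀cl : IsClosed C₀) (hC₀sub : C₀ ⊆ interior Cω) :
    f ⁻¹' Cω ∈ 𝓝 x := by
  classical
  -- global compact neighbourhoods
  have hLex : ∀ α, ∃ K ∈ 𝓝 (x α), K ⊆ Set.univ ∧ IsClosed K ∧ IsCompact K :=
    fun α => hX α (x α) Set.univ univ_mem
  choose L hLn _ _ hLc using hLex
  obtain ⟨s, hs⟩ := exists_good_state hX hf hLn hLc hC₀n hC₀cl hC₀sub
  -- the tube is a neighbourhood of x
  have hT : s.F.pi s.K ∈ 𝓝 x := set_pi_mem_nhds s.hFfin (fun α _ => s.hKnhds α)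
  refine mem_of_superset hT ?_
  intro z hz
  by_contra hzC
  -- hybrid compact set through z
  set Q : ∀ α, Set (X α) := fun α => if α ∈ s.F then s.K α else {x α, z α} with hQ
  have hQcomp : ∀ α, IsCompact (Q α) := by
    intro α
    by_cases h : α ∈ s.F <;> simp only [hQ, h, if_true, if_false]
    · exact s.hKcomp α h
    · exact ((finite_singleton (z α)).insert (x α)).isCompact
  have hzQ : z ∈ Set.pi Set.univ Q := by
    intro α _
    by_cases h : α ∈ s.F <;> simp only [hQ, h, if_true, if_false]
    · exact hz α h
    · exact Or.inr rfl
  have hcw : ContinuousWithinAt f (Set.pi Set.univ Q) z :=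
    hf _ (isCompact_univ_pi hQcomp) z hzQ
  have hop : Cωᶜ ∈ 𝓝 (f z) := hCωcl.isOpen_compl.mem_nhds hzC
  have hpre : f ⁻¹' Cωᶜ ∈ 𝓝[Set.pi Set.univ Q] z := hcw.preimage_mem_nhdsWithin hop
  rw [mem_nhdsWithin_iff_exists_mem_nhds_inter] at hpre
  obtain ⟨N, hN, hNQ⟩ := hpre
  rw [nhds_pi, Filter.mem_pi] at hN
  obtain ⟨I, hIfin, t, ht, htN⟩ := hN
  -- the hybrid point
  set h : ∀ α, X α := fun α => if α ∈ s.F ∪ I then z α else x α with hh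
  have hhval : ∀ α, α ∈ s.F ∪ I → h α = z α := fun α hα => if_pos hα
  have hhval' : ∀ α, α ∉ s.F ∪ I → h α = x α := fun α hα => if_neg hα
  have hhN : h ∈ N := by
    refine htN ?_
    intro α hα
    rw [hhval α (Or.inr hα)]
    exact mem_of_mem_nhds (ht α)
  have hhQ : h ∈ Set.pi Set.univ Q := by
    intro α _
    by_cases hF : α ∈ s.F
    · simp only [hQ, hF, if_true]
      rw [hhval α (Or.inl hF)]
      exact hz α hF
    · simp only [hQ, hF, if_false]
      by_cases hI : α ∈ s.F ∪ I
      · rw [hhval α hI]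
        exact Or.inr rfl
      · rw [hhval' α hI]
        exact Or.inl rfl
  have hbad : f h ∈ Cωᶜ := hNQ ⟨hhN, hhQ⟩
  -- but h is a good point
  have hgood : f h ∈ Cω := by
    refine hs h ?_ ?_
    · intro α
      by_cases hF : α ∈ s.F
      · rw [hhval α (Or.inl hF)]
        exact hz α hF
      · rw [s.hKuniv α hF]
        exact mem_univ _
    · refine (s.hFfin.union hIfin).subset ?_
      intro α hα
      by_contra hc
      exact hα (hhval' α hc)
  exact hbad hgood

end Aux

theorem preimage_nhds_of_continuousOn_quasicompact
    {A : Type*} {X : A → Type*} [∀ α, TopologicalSpace (X α)]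
    {Y : Type*} [TopologicalSpace Y]
    (hX : ∀ (α : A) (x : X α), ∀ U ∈ nhds x,
      ∃ K ∈ nhds x, K ⊆ U ∧ IsClosed K ∧ IsCompact K)
    (hY : ∀ (y : Y), ∀ U ∈ nhds y, ∃ C ∈ nhds y, C ⊆ U ∧ IsClosed C)
    (f : (∀ α, X α) → Y)
    (hf : ∀ C : Set (∀ α, X α), IsCompact C → ContinuousOn f C) :
    ∀ x : ∀ α, X α, (∀ U ∈ nhds (f x), f ⁻¹' U ∈ nhds x) ∧ ContinuousAt f x := by
  intro x
  have hmain : ∀ U ∈ nhds (f x), f ⁻¹' U ∈ nhds x := by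
    intro U hU
    obtain ⟨Cω, hCωn, hCωU, hCωcl⟩ := hY (f x) U hU
    have hintn : interior Cω ∈ nhds (f x) := interior_mem_nhds.2 hCωn
    obtain ⟨C₀, hC₀n, hC₀sub, hC₀cl⟩ := hY (f x) (interior Cω) hintn
    have : f ⁻¹' Cω ∈ nhds x := key_lemma hX hf x hCωcl hC₀n hC₀cl hC₀sub
    exact Filter.mem_of_superset this (Set.preimage_mono hCωU)
  refine ⟨hmain, ?_⟩
  rw [ContinuousAt, Filter.tendsto_def]
  exact hmain
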